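/- Let α(t), β(t), γ(t) be continuous nonnegative functions on [t₀, ∞), t₀ ≥ 0 fixed. Suppose there exists a function μ ∈ C¹[t₀, ∞) with μ > 0 and lim_{t→∞} μ(t) = ∞ such that for all t ≥ t₀: 0 ≤ α(t) ≤ (μ(t)/2)(γ(t) − μ′(t)/μ(t)) and β(t) ≤ (1/(2μ(t)))(γ(t) − μ′(t)/μ(t)), and μ(t₀) g(t₀) < 1. If g : [t₀, ∞) → [0, ∞) is differentiable and satisfies g′(t) ≤ −γ(t) g(t) + α(t) g(t)² + β(t) for all t ≥ t₀, then 0 ≤ g(t) < 1/μ(t) for all t ≥ t₀. The same conclusion holds on any interval [t₀, T) on which the hypotheses hold. -/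

import Mathlib

open Filter Topology Set

lemma aux_diff_ineq (t₀ b : ℝ) (α β γ μ μ' g g' : ℝ → ℝ)
    (hγc : ContinuousOn γ (Ici t₀)) (hμ'c : ContinuousOn μ' (Ici t₀))
    (hαnn : ∀ t ∈ Ici t₀, 0 ≤ α t)
    (hμ : ∀ t ∈ Ici t₀, HasDerivAt μ (μ' t) t)
    (hμpos : ∀ t ∈ Ici t₀, 0 < μ t)
    (hg : ∀ t ∈ Ici t₀, HasDerivAt g (g' t) t) (hgnn : ∀ t ∈ Ici t₀, 0 ≤ g t)
    (hgineq : ∀ t ∈ Ici t₀, g' t ≤ -γ t * g t + α t * g t ^ 2 + β t)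
    (hinit : μ t₀ * g t₀ < 1)
    (hb : t₀ ≤ b)
    (hα : ∀ t ∈ Icc t₀ b, α t ≤ μ t / 2 * (γ t - μ' t / μ t))
    (hβ : ∀ t ∈ Icc t₀ b, β t ≤ 1 / (2 * μ t) * (γ t - μ' t / μ t)) :
    μ b * g b < 1 := by
  set ψ : ℝ → ℝ := fun t => 1 - μ t * g t with hψdef
  set ψ' : ℝ → ℝ := fun t => -(μ' t * g t + μ t * g' t) with hψ'def
  clear_value ψ ψ'
  have hψd : ∀ t ∈ Ici t₀, HasDerivAt ψ (ψ' t) t := by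
    intro t ht
    rw [hψdef, hψ'def]
    have := (hasDerivAt_const t (1:ℝ)).sub ((hμ t ht).mul (hg t ht))
    exact this.congr_deriv (by simp)
  -- key pointwise inequality: 0 ≤ 2 μ ψ' + D ψ² with D = μγ - μ'
  have hkey : ∀ t ∈ Icc t₀ b,
      0 ≤ 2 * μ t * ψ' t + (μ t * γ t - μ' t) * (ψ t) ^ 2 := by
    intro t ht
    have ht0 : t ∈ Ici t₀ := ht.1
    have hμt : 0 < μ t := hμpos t ht0
    have hA : 2 * α t ≤ μ t * γ t - μ' t := by
      have h1 := hα t ht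
      have h2 : μ t / 2 * (γ t - μ' t / μ t) = (μ t * γ t - μ' t) / 2 := by
        field_simp
      rw [h2] at h1; linarith
    have hB : 2 * (μ t) ^ 2 * β t ≤ μ t * γ t - μ' t := by
      have h1 := hβ t ht
      have h2 : 1 / (2 * μ t) * (γ t - μ' t / μ t) = (μ t * γ t - μ' t) / (2 * (μ t) ^ 2) := by
        field_simp
      rw [h2, le_div_iff₀ (by positivity)] at h1
      nlinarith
    have hD : 0 ≤ μ t * γ t - μ' t := le_trans (by nlinarith [hαnn t ht0]) hA
    have hgi := hgineq t ht0
    have hgn := hgnn t ht0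
    simp only [hψdef, hψ'def]
    nlinarith [sq_nonneg (g t), mul_pos hμt hμt, sq_nonneg (1 - μ t * g t),
      mul_le_mul_of_nonneg_left hgi (by positivity : (0:ℝ) ≤ 2 * (μ t)^2),
      mul_le_mul_of_nonneg_left hA (mul_nonneg (sq_nonneg (μ t)) (sq_nonneg (g t)))]
  have hψ0 : 0 < ψ t₀ := by simp [hψdef]; linarith
  -- show ψ b > 0 by contradiction via first zero
  by_contra hcon
  push_neg at hcon
  have hψb : ψ b ≤ 0 := by simp [hψdef]; linarith
  set A : Set ℝ := {t ∈ Icc t₀ b | ψ t ≤ 0} with hAdef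
  have hψcont : ContinuousOn ψ (Icc t₀ b) := fun t ht =>
    ((hψd t ht.1).continuousAt).continuousWithinAt
  have hAclosed : IsClosed A := by
    have : A = Icc t₀ b ∩ ψ ⁻¹' (Iic 0) := by ext t; simp [hAdef, and_assoc]
    rw [this]
    exact hψcont.preimage_isClosed_of_isClosed isClosed_Icc isClosed_Iic
  have hAne : A.Nonempty := ⟨b, ⟨hb, le_refl b⟩, hψb⟩
  have hAbdd : BddBelow A := ⟨t₀, fun t ht => ht.1.1⟩
  set t₁ := sInf A with ht₁def
  have ht₁A : t₁ ∈ A := hAclosed.csInf_mem hAne hAbdd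
  have ht₁Icc : t₁ ∈ Icc t₀ b := ht₁A.1
  have ht₀t₁ : t₀ < t₁ := by
    rcases lt_or_eq_of_le ht₁Icc.1 with h | h
    · exact h
    · exfalso; rw [← h] at ht₁A; linarith [ht₁A.2]
  have hψpos : ∀ t ∈ Ico t₀ t₁, 0 < ψ t := by
    intro t ht
    by_contra h
    push_neg at h
    have : t ∈ A := ⟨⟨ht.1, le_trans (le_of_lt ht.2) ht₁Icc.2⟩, h⟩
    exact absurd (csInf_le hAbdd this) (not_le.mpr ht.2)
  -- max of q = (γ - μ'/μ)/2 on [t₀, t₁]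
  have hμcont : ContinuousOn μ (Icc t₀ t₁) := fun t ht =>
    ((hμ t ht.1).continuousAt).continuousWithinAt
  have hμne : ∀ t ∈ Icc t₀ t₁, μ t ≠ 0 := fun t ht => ne_of_gt (hμpos t ht.1)
  have hqc : ContinuousOn (fun t => (γ t - μ' t / μ t) / 2) (Icc t₀ t₁) := by
    apply ContinuousOn.div_const
    exact (hγc.mono (Icc_subset_Ici_self)).sub
      ((hμ'c.mono (Icc_subset_Ici_self)).div hμcont hμne)
  obtain ⟨c, hc, hcmax⟩ := isCompact_Icc.exists_isMaxOn (nonempty_Icc.mpr (le_of_lt ht₀t₁)) hqc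
  set K := (γ c - μ' c / μ c) / 2 with hKdef
  clear_value K
  have hIccsub : Icc t₀ t₁ ⊆ Icc t₀ b := Icc_subset_Icc le_rfl ht₁Icc.2
  have hqnn : ∀ t ∈ Icc t₀ t₁, 0 ≤ (γ t - μ' t / μ t) / 2 := by
    intro t ht
    have hμt := hμpos t ht.1
    have := hα t (hIccsub ht)
    have := hαnn t ht.1
    nlinarith
  have hK0 : 0 ≤ K := by rw [hKdef]; exact hqnn c hc
  have hKge : ∀ t ∈ Icc t₀ t₁, (γ t - μ' t / μ t) / 2 ≤ K := by
    intro t ht; rw [hKdef]; exact hcmax ht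
  -- φ = ψ * exp(K t) monotone on [t₀, t₁]
  set φ : ℝ → ℝ := fun t => ψ t * Real.exp (K * t) with hφdef
  clear_value φ
  have hφd : ∀ t ∈ Ici t₀, HasDerivAt φ
      (ψ' t * Real.exp (K * t) + ψ t * (Real.exp (K * t) * K)) t := by
    intro t ht
    have he : HasDerivAt (fun t => Real.exp (K * t)) (Real.exp (K * t) * K) t := by
      simpa using (((hasDerivAt_id t).const_mul K).exp)
    rw [hφdef]
    exact (hψd t ht).mul he
  have hφmono : MonotoneOn φ (Icc t₀ t₁) := by
    apply monotoneOn_of_deriv_nonneg (convex_Icc t₀ t₁)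
    · exact fun t ht => ((hφd t ht.1).continuousAt).continuousWithinAt
    · intro t ht
      rw [interior_Icc] at ht
      exact ((hφd t (le_of_lt ht.1)).differentiableAt).differentiableWithinAt
    · intro t ht
      rw [interior_Icc] at ht
      have ht' : t ∈ Ici t₀ := le_of_lt ht.1
      rw [(hφd t ht').deriv]
      have hμt : 0 < μ t := hμpos t ht'
      have htIcc : t ∈ Icc t₀ t₁ := ⟨le_of_lt ht.1, le_of_lt ht.2⟩
      have hkey' := hkey t (hIccsub htIcc)
      have hψt : 0 < ψ t := hψpos t ⟨le_of_lt ht.1, ht.2⟩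
      have hψle : ψ t ≤ 1 := by
        simp only [hψdef]
        nlinarith [mul_nonneg (le_of_lt hμt) (hgnn t ht')]
      have hKt := hKge t htIcc
      have hqt := hqnn t htIcc
      have hexp : 0 < Real.exp (K * t) := Real.exp_pos _
      -- from hkey': ψ' ≥ -(D/(2μ))ψ², and D/(2μ) = q ≤ K
      have hq : (μ t * γ t - μ' t) = 2 * μ t * ((γ t - μ' t / μ t) / 2) := by
        field_simp
      rw [hq] at hkey'
      have hm1 : ((γ t - μ' t / μ t) / 2) * ψ t ≤ K * ψ t :=
        mul_le_mul_of_nonneg_right hKt (le_of_lt hψt)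
      have hm2 : ((γ t - μ' t / μ t) / 2) * ψ t * ψ t ≤ ((γ t - μ' t / μ t) / 2) * ψ t * 1 :=
        mul_le_mul_of_nonneg_left hψle (mul_nonneg hqt (le_of_lt hψt))
      have e1 := mul_le_mul_of_nonneg_left hm1 (by positivity : (0:ℝ) ≤ 2 * μ t)
      have e2 := mul_le_mul_of_nonneg_left hm2 (by positivity : (0:ℝ) ≤ 2 * μ t)
      have h1 : 0 ≤ ψ' t + K * ψ t := by
        by_contra hneg
        push_neg at hneg
        have hprod : 2 * μ t * (ψ' t + K * ψ t) < 0 :=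
          mul_neg_of_pos_of_neg (by positivity) hneg
        linarith [hkey', e1, e2]
      nlinarith [mul_nonneg h1 (le_of_lt hexp)]
  have := hφmono ⟨le_rfl, le_of_lt ht₀t₁⟩ ⟨le_of_lt ht₀t₁, le_rfl⟩ (le_of_lt ht₀t₁)
  have hφ0 : 0 < φ t₀ := by
    rw [hφdef]; exact mul_pos hψ0 (Real.exp_pos _)
  have hφ1 : φ t₁ ≤ 0 := by
    rw [hφdef]; exact mul_nonpos_of_nonpos_of_nonneg ht₁A.2 (le_of_lt (Real.exp_pos _))
  linarith

/-- (The basic differential-inequality lemma, \cite[p.97]{R499}.)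
Let `α, β, γ` be continuous nonnegative functions on `[t₀, ∞)`, `t₀ ≥ 0` fixed.  Suppose
there is `μ ∈ C¹[t₀, ∞)` with `μ > 0` and `μ(t) → ∞` such that
`0 ≤ α(t) ≤ (μ(t)/2)(γ(t) - μ′(t)/μ(t))`, `β(t) ≤ (1/(2μ(t)))(γ(t) - μ′(t)/μ(t))`, and
`μ(t₀)g(t₀) < 1`.  If `g ≥ 0` is differentiable and satisfies
`g′(t) ≤ -γ(t)g(t) + α(t)g(t)² + β(t)` for `t ≥ t₀`, then `0 ≤ g(t) < 1/μ(t)` for all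
`t ≥ t₀`.  The same conclusion holds on any interval `[t₀, T)` on which the corresponding
hypotheses hold. -/
theorem differential_inequality_lemma
    (t₀ : ℝ) (ht₀ : 0 ≤ t₀) (α β γ μ μ' g g' : ℝ → ℝ)
    (hαc : ContinuousOn α (Ici t₀)) (hβc : ContinuousOn β (Ici t₀))
    (hγc : ContinuousOn γ (Ici t₀))
    (hαnn : ∀ t ∈ Ici t₀, 0 ≤ α t) (hβnn : ∀ t ∈ Ici t₀, 0 ≤ β t)
    (hγnn : ∀ t ∈ Ici t₀, 0 ≤ γ t)
    (hμ : ∀ t ∈ Ici t₀, HasDerivAt μ (μ' t) t) (hμ'c : ContinuousOn μ' (Ici t₀))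
    (hμpos : ∀ t ∈ Ici t₀, 0 < μ t)
    (hg : ∀ t ∈ Ici t₀, HasDerivAt g (g' t) t) (hgnn : ∀ t ∈ Ici t₀, 0 ≤ g t)
    (hgineq : ∀ t ∈ Ici t₀, g' t ≤ -γ t * g t + α t * g t ^ 2 + β t)
    (hinit : μ t₀ * g t₀ < 1) :
    ((Tendsto μ atTop atTop) →
      (∀ t ∈ Ici t₀, α t ≤ μ t / 2 * (γ t - μ' t / μ t)) →
      (∀ t ∈ Ici t₀, β t ≤ 1 / (2 * μ t) * (γ t - μ' t / μ t)) →
      ∀ t ∈ Ici t₀, 0 ≤ g t ∧ g t < 1 / μ t) ∧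
    (∀ T : ℝ, t₀ < T →
      (∀ t ∈ Ico t₀ T, α t ≤ μ t / 2 * (γ t - μ' t / μ t)) →
      (∀ t ∈ Ico t₀ T, β t ≤ 1 / (2 * μ t) * (γ t - μ' t / μ t)) →
      ∀ t ∈ Ico t₀ T, 0 ≤ g t ∧ g t < 1 / μ t) := by
  have main : ∀ b ∈ Ici t₀,
      (∀ t ∈ Icc t₀ b, α t ≤ μ t / 2 * (γ t - μ' t / μ t)) →
      (∀ t ∈ Icc t₀ b, β t ≤ 1 / (2 * μ t) * (γ t - μ' t / μ t)) →
      0 ≤ g b ∧ g b < 1 / μ b := by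
    intro b hb h1 h2
    refine ⟨hgnn b hb, ?_⟩
    have := aux_diff_ineq t₀ b α β γ μ μ' g g' hγc hμ'c hαnn hμ hμpos hg hgnn hgineq hinit hb h1 h2
    rw [lt_div_iff₀ (hμpos b hb)]
    linarith [this, mul_comm (μ b) (g b)]
  constructor
  · intro _ hα hβ t ht
    exact main t ht (fun s hs => hα s hs.1)
      (fun s hs => hβ s hs.1)
  · intro T hT hα hβ t ht
    exact main t ht.1 (fun s hs => hα s ⟨hs.1, lt_of_le_of_lt hs.2 ht.2⟩)
      (fun s hs => hβ s ⟨hs.1, lt_of_le_of_lt hs.2 ht.2⟩)
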